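/- arXiv:2101.04208 — 3 statements merged into one kernel-verified Lean document; each statement's English description precedes it below -/
import Mathlib

section
/- Let n ∈ ℕ, p ∈ [1/2,1), q = 1−p, and let X be a random variable with P(X = √(q/p)) = p and P(X = −√(p/q)) = q. For all ε > 0 and γ > 0 the quantity (γ/(ε√n))·|E[X³·1_{|X|<ε√n}]| + sup_{0<z<ε√n} E[X²·1_{|X|≥z}] equals: 1, if n·ε² ≤ q/p; (γ/ε)·√(q³/(np)) + 1, if q/p < n·ε² ≤ p/q; and γ·(p−q)/(ε·√(n·p·q)) + 1, if n·ε² > p/q. -/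
open MeasureTheory Real Set

/-- Truncated third moment `E[X³·1_{|X|<z}]`. -/
noncomputable def mu3 {Ω : Type*} [MeasurableSpace Ω] (μ : Measure Ω) (X : Ω → ℝ) (z : ℝ) : ℝ :=
  ∫ ω, (if |X ω| < z then (X ω) ^ 3 else 0) ∂μ

/-- Truncated second moment `E[X²·1_{|X|≥z}]`. -/
noncomputable def sig2 {Ω : Type*} [MeasurableSpace Ω] (μ : Measure Ω) (X : Ω → ℝ) (z : ℝ) : ℝ :=
  ∫ ω, (if z ≤ |X ω| then (X ω) ^ 2 else 0) ∂μ

lemma integral_two_point {Ω : Type*} [MeasurableSpace Ω] (μ : Measure Ω) [IsProbabilityMeasure μ]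
    (X : Ω → ℝ) (hX : Measurable X) (a b p q : ℝ) (hab : a ≠ b)
    (hA : μ {ω | X ω = a} = ENNReal.ofReal p) (hB : μ {ω | X ω = b} = ENNReal.ofReal q)
    (hp : 0 ≤ p) (hq : 0 ≤ q) (hpq : p + q = 1) (h : ℝ → ℝ) :
    ∫ ω, h (X ω) ∂μ = h a * p + h b * q := by
  have hAm : MeasurableSet {ω | X ω = a} := hX (measurableSet_singleton a)
  have hBm : MeasurableSet {ω | X ω = b} := hX (measurableSet_singleton b)
  set A : Set Ω := {ω | X ω = a}
  set B : Set Ω := {ω | X ω = b}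
  have hdisj : Disjoint A B := by
    rw [Set.disjoint_left]
    intro ω hωA hωB
    exact hab (hωA.symm.trans hωB)
  have hU : μ (A ∪ B) = 1 := by
    rw [measure_union hdisj hBm, hA, hB, ← ENNReal.ofReal_add hp hq, hpq, ENNReal.ofReal_one]
  have hc : μ ((A ∪ B)ᶜ) = 0 := by
    rw [measure_compl (hAm.union hBm) (measure_ne_top μ _), hU, measure_univ, tsub_self]
  have hae : (fun ω => h (X ω)) =ᵐ[μ]
      (fun ω => A.indicator (fun _ => h a) ω + B.indicator (fun _ => h b) ω) := by
    refine Filter.eventually_of_mem (mem_ae_iff.2 hc) ?_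
    intro ω hω
    rcases hω with hωA | hωB
    · have hnB : ω ∉ B := fun hωB => hab (hωA.symm.trans hωB)
      simp only [Set.indicator_of_mem hωA, Set.indicator_of_notMem hnB, add_zero]
      exact congrArg h hωA
    · have hnA : ω ∉ A := fun hωA => hab (hωA.symm.trans hωB)
      simp only [Set.indicator_of_mem hωB, Set.indicator_of_notMem hnA, zero_add]
      exact congrArg h hωB
  rw [integral_congr_ae hae,
    integral_add ((integrable_const (h a)).indicator hAm) ((integrable_const (h b)).indicator hBm),
    integral_indicator_const _ hAm, integral_indicator_const _ hBm, measureReal_def, measureReal_def, hA, hB,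
    ENNReal.toReal_ofReal hp, ENNReal.toReal_ofReal hq]
  simp [mul_comm]

set_option maxHeartbeats 1000000 in
theorem rozovskii_fraction_gconst_two_point
    {Ω : Type*} [MeasurableSpace Ω] (μ : Measure Ω) [IsProbabilityMeasure μ]
    (n : ℕ) (hn : 0 < n) (p : ℝ) (hp : p ∈ Set.Ico (1/2 : ℝ) 1) (q : ℝ) (hq : q = 1 - p)
    (X : Ω → ℝ) (hX : Measurable X)
    (hXp : μ {ω | X ω = Real.sqrt (q / p)} = ENNReal.ofReal p)
    (hXq : μ {ω | X ω = -Real.sqrt (p / q)} = ENNReal.ofReal q)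
    (ε γ : ℝ) (hε : 0 < ε) (hγ : 0 < γ) :
    ((n : ℝ) * ε ^ 2 ≤ q / p →
      γ / (ε * Real.sqrt n) * |mu3 μ X (ε * Real.sqrt n)| +
        sSup ((fun z => sig2 μ X z) '' Set.Ioo (0 : ℝ) (ε * Real.sqrt n)) = 1) ∧
    (q / p < (n : ℝ) * ε ^ 2 → (n : ℝ) * ε ^ 2 ≤ p / q →
      γ / (ε * Real.sqrt n) * |mu3 μ X (ε * Real.sqrt n)| +
        sSup ((fun z => sig2 μ X z) '' Set.Ioo (0 : ℝ) (ε * Real.sqrt n))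
        = γ / ε * Real.sqrt (q ^ 3 / ((n : ℝ) * p)) + 1) ∧
    (p / q < (n : ℝ) * ε ^ 2 →
      γ / (ε * Real.sqrt n) * |mu3 μ X (ε * Real.sqrt n)| +
        sSup ((fun z => sig2 μ X z) '' Set.Ioo (0 : ℝ) (ε * Real.sqrt n))
        = γ * (p - q) / (ε * Real.sqrt ((n : ℝ) * p * q)) + 1) := by
  obtain ⟨hp1, hp2⟩ := hp
  have hp0 : 0 < p := by linarith
  have hq0 : 0 < q := by rw [hq]; linarith
  have hqp : q ≤ p := by rw [hq]; linarith
  have hpq1 : p + q = 1 := by rw [hq]; ring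
  have hn0 : (0:ℝ) < (n:ℝ) := by exact_mod_cast hn
  set sp := Real.sqrt p with hspdef
  set sq := Real.sqrt q with hsqdef
  set sn := Real.sqrt (n:ℝ) with hsndef
  have hsp : 0 < sp := Real.sqrt_pos.2 hp0
  have hsq : 0 < sq := Real.sqrt_pos.2 hq0
  have hsn : 0 < sn := Real.sqrt_pos.2 hn0
  have hsp2 : sp ^ 2 = p := Real.sq_sqrt hp0.le
  have hsq2 : sq ^ 2 = q := Real.sq_sqrt hq0.le
  have hsn2 : sn ^ 2 = (n:ℝ) := Real.sq_sqrt hn0.le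
  have ha : Real.sqrt (q / p) = sq / sp := Real.sqrt_div hq0.le p
  have hb : Real.sqrt (p / q) = sp / sq := Real.sqrt_div hp0.le q
  have hab2 : sq / sp ≤ sp / sq := by
    rw [div_le_div_iff₀ hsp hsq]
    nlinarith
  have hane : Real.sqrt (q / p) ≠ -Real.sqrt (p / q) := by
    rw [ha, hb]
    have h1 : 0 < sq / sp := div_pos hsq hsp
    have h2 : 0 < sp / sq := div_pos hsp hsq
    intro hcon; linarith [hcon]
  set T := ε * sn with hTdef
  have hT : 0 < T := mul_pos hε hsn
  -- sig2 formula
  have hsig : ∀ z : ℝ, sig2 μ X z =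
      (if z ≤ sq / sp then q else 0) + (if z ≤ sp / sq then p else 0) := by
    intro z
    have := integral_two_point μ X hX (Real.sqrt (q/p)) (-Real.sqrt (p/q)) p q hane hXp hXq
      hp0.le hq0.le hpq1 (fun x => if z ≤ |x| then x ^ 2 else 0)
    have habs1 : |Real.sqrt (q/p)| = sq / sp := by
      rw [abs_of_nonneg (Real.sqrt_nonneg _), ha]
    have habs2 : |(-Real.sqrt (p/q))| = sp / sq := by
      rw [abs_neg, abs_of_nonneg (Real.sqrt_nonneg _), hb]
    rw [sig2]
    rw [this, habs1, habs2, ha, hb]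
    have e1 : (if z ≤ sq / sp then (sq / sp) ^ 2 else 0) * p = (if z ≤ sq / sp then q else 0) := by
      split_ifs
      · rw [div_pow, hsp2, hsq2, div_mul_cancel₀ _ hp0.ne']
      · ring
    have e2 : (if z ≤ sp / sq then (-(sp / sq)) ^ 2 else 0) * q
        = (if z ≤ sp / sq then p else 0) := by
      split_ifs
      · rw [neg_pow, div_pow, hsp2, hsq2]
        field_simp
      · ring
    rw [e1, e2]
  -- sSup = 1
  have hSup : sSup ((fun z => sig2 μ X z) '' Set.Ioo (0 : ℝ) T) = 1 := by
    apply IsGreatest.csSup_eq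
    constructor
    · refine ⟨min (sq / sp) T / 2, ⟨?_, ?_⟩, ?_⟩
      · have : 0 < min (sq / sp) T := lt_min (div_pos hsq hsp) hT
        linarith
      · have h1 : min (sq / sp) T ≤ T := min_le_right _ _
        have : 0 < min (sq / sp) T := lt_min (div_pos hsq hsp) hT
        linarith
      · simp only
        rw [hsig]
        have h1 : min (sq / sp) T / 2 ≤ sq / sp := by
          have := min_le_left (sq / sp) T
          have : 0 < min (sq / sp) T := lt_min (div_pos hsq hsp) hT
          have := min_le_left (sq / sp) T
          linarith
        have h2 : min (sq / sp) T / 2 ≤ sp / sq := le_trans h1 hab2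
        rw [if_pos h1, if_pos h2]
        linarith
    · rintro x ⟨z, _, rfl⟩
      simp only
      rw [hsig]
      split_ifs <;> linarith
  -- mu3 formula
  have hmu : mu3 μ X T =
      (if sq / sp < T then sq ^ 3 / sp else 0) + (if sp / sq < T then -(sp ^ 3 / sq) else 0) := by
    have := integral_two_point μ X hX (Real.sqrt (q/p)) (-Real.sqrt (p/q)) p q hane hXp hXq
      hp0.le hq0.le hpq1 (fun x => if |x| < T then x ^ 3 else 0)
    have habs1 : |Real.sqrt (q/p)| = sq / sp := by
      rw [abs_of_nonneg (Real.sqrt_nonneg _), ha]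
    have habs2 : |(-Real.sqrt (p/q))| = sp / sq := by
      rw [abs_neg, abs_of_nonneg (Real.sqrt_nonneg _), hb]
    rw [mu3, this, habs1, habs2, ha, hb]
    have e1 : (if sq / sp < T then (sq / sp) ^ 3 else 0) * p
        = (if sq / sp < T then sq ^ 3 / sp else 0) := by
      split_ifs
      · rw [← hsp2]; field_simp
      · ring
    have e2 : (if sp / sq < T then (-(sp / sq)) ^ 3 else 0) * q
        = (if sp / sq < T then -(sp ^ 3 / sq) else 0) := by
      split_ifs
      · rw [← hsq2]; field_simp
      · ring
    rw [e1, e2]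
  -- condition equivalences
  have sqiff : ∀ x y : ℝ, 0 ≤ x → 0 ≤ y → (x ≤ y ↔ x ^ 2 ≤ y ^ 2) := by
    intro x y hx hy
    constructor
    · intro h; nlinarith
    · intro h; nlinarith
  have hT2 : T ^ 2 = (n:ℝ) * ε ^ 2 := by
    rw [hTdef, mul_pow, hsn2]; ring
  have hqp2 : (sq / sp) ^ 2 = q / p := by
    rw [div_pow, hsp2, hsq2]
  have hpq2 : (sp / sq) ^ 2 = p / q := by
    rw [div_pow, hsp2, hsq2]
  have hcond1 : (n : ℝ) * ε ^ 2 ≤ q / p ↔ T ≤ sq / sp := by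
    rw [sqiff T (sq/sp) hT.le (div_pos hsq hsp).le, hT2, hqp2]
  have hcond2 : (n : ℝ) * ε ^ 2 ≤ p / q ↔ T ≤ sp / sq := by
    rw [sqiff T (sp/sq) hT.le (div_pos hsp hsq).le, hT2, hpq2]
  refine ⟨?_, ?_, ?_⟩
  · intro h
    rw [hcond1] at h
    rw [hmu, if_neg (by linarith), if_neg (by linarith [hab2]), hSup]
    simp
  · intro h1 h2
    have h1' : sq / sp < T := lt_of_not_ge fun hc => (not_le.2 h1) (hcond1.2 hc)
    rw [hcond2] at h2
    rw [hmu, if_pos h1', if_neg (by linarith), hSup, add_zero]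
    have hnn : 0 ≤ sq ^ 3 / sp := by positivity
    rw [abs_of_nonneg hnn]
    have hroot : Real.sqrt (q ^ 3 / ((n:ℝ) * p)) = sq ^ 3 / (sn * sp) := by
      have h9 : q ^ 3 / ((n:ℝ) * p) = (sq ^ 3 / (sn * sp)) ^ 2 := by
        rw [← hsp2, ← hsq2, ← hsn2]; field_simp
      rw [h9, Real.sqrt_sq (by positivity)]
    rw [hroot, hTdef]
    field_simp
  · intro h3
    have h3' : sp / sq < T := lt_of_not_ge fun hc => (not_le.2 h3) (hcond2.2 hc)
    have h1' : sq / sp < T := lt_of_le_of_lt hab2 h3'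
    rw [hmu, if_pos h1', if_pos h3', hSup]
    have hsum : sq ^ 2 + sp ^ 2 = 1 := by rw [hsp2, hsq2]; linarith
    have hval : sq ^ 3 / sp + -(sp ^ 3 / sq) = -((p - q) / (sp * sq)) := by
      rw [← hsp2, ← hsq2]; field_simp
      linear_combination (sq ^ 2 - sp ^ 2) * hsum
    rw [hval, abs_neg, abs_of_nonneg (div_nonneg (by linarith) (by positivity) : (0:ℝ) ≤ (p - q) / (sp * sq))]
    have hroot : Real.sqrt ((n:ℝ) * p * q) = sn * sp * sq := by
      have h9 : (n:ℝ) * p * q = (sn * sp * sq) ^ 2 := by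
        rw [← hsp2, ← hsq2, ← hsn2]; ring
      rw [h9, Real.sqrt_sq (by positivity)]
    rw [hroot, hTdef]
    field_simp
end

section
/- Let n ∈ ℕ, ε > 1, γ > 0, p ∈ [1/2,1), q = 1−p, and let X be a random variable with P(X = √(q/p)) = p and P(X = −√(p/q)) = q. Define L = n^{−1/2}·sup_{0<z<ε√n} ( max{z,√n}/z )·( γ·|E[X³·1_{|X|<z}]| + z·E[X²·1_{|X|≥z}] ). If p = 1/2 then L = 1. If p > 1/2 then: L = max{ 1, γ·q + p, γ·q^{3/2}/√(np) + p·ε }, if n·ε² ≤ p/q; L = max{ 1, γ·q + p, (γ·q² + p²)/√(n·p·q), γ·(p−q)/√(n·p·q) }, if n ≤ p/q < n·ε²; and L = max{ 1, γ·q + p, γ·(p−q)/p }, if n > p/q. -/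
open MeasureTheory Real Set Filter Topology

lemma two_point_integral {Ω : Type*} [MeasurableSpace Ω] (μ : Measure Ω) [IsProbabilityMeasure μ]
    (X : Ω → ℝ) (hX : Measurable X) (va vb p q : ℝ) (hne : va ≠ vb)
    (hp : 0 ≤ p) (hq : 0 ≤ q) (hpq : p + q = 1)
    (hA : μ {ω | X ω = va} = ENNReal.ofReal p) (hB : μ {ω | X ω = vb} = ENNReal.ofReal q)
    (g : ℝ → ℝ) : ∫ ω, g (X ω) ∂μ = p * g va + q * g vb := by
  set A : Set Ω := X ⁻¹' {va} with hAdef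
  set B : Set Ω := X ⁻¹' {vb} with hBdef
  have hAm : MeasurableSet A := hX (measurableSet_singleton va)
  have hBm : MeasurableSet B := hX (measurableSet_singleton vb)
  have hAe : A = {ω | X ω = va} := rfl
  have hBe : B = {ω | X ω = vb} := rfl
  have hdisj : Disjoint A B := by
    rw [Set.disjoint_left]
    intro ω hωA hωB
    exact hne ((hωA.symm).trans hωB)
  have hAB : μ (A ∪ B) = 1 := by
    rw [measure_union hdisj hBm, hAe, hBe, hA, hB, ← ENNReal.ofReal_add hp hq, hpq,
      ENNReal.ofReal_one]
  have hcompl : μ (A ∪ B)ᶜ = 0 := by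
    rw [measure_compl (hAm.union hBm) (measure_ne_top μ _), hAB, measure_univ, tsub_self]
  have hae : (fun ω => g (X ω)) =ᵐ[μ]
      (fun ω => A.indicator (fun _ => g va) ω + B.indicator (fun _ => g vb) ω) := by
    filter_upwards [measure_eq_zero_iff_ae_notMem.mp hcompl] with ω hω
    simp only [Set.mem_compl_iff, not_not] at hω
    rcases hω with hωA | hωB
    · have h1 : X ω = va := hωA
      have h2 : ω ∉ B := fun hωB => hne (h1.symm.trans hωB)
      rw [Set.indicator_of_mem hωA, Set.indicator_of_notMem h2, h1, add_zero]
    · have h1 : X ω = vb := hωB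
      have h2 : ω ∉ A := fun hωA => hne ((hωA : X ω = va).symm.trans h1)
      rw [Set.indicator_of_mem hωB, Set.indicator_of_notMem h2, h1, zero_add]
  rw [integral_congr_ae hae, integral_add ((integrable_const (g va)).indicator hAm)
    ((integrable_const (g vb)).indicator hBm), integral_indicator_const _ hAm,
    integral_indicator_const _ hBm, hAe, hBe, measureReal_def, measureReal_def, hA, hB, ENNReal.toReal_ofReal hp,
    ENNReal.toReal_ofReal hq]
  simp [smul_eq_mul]


private lemma le_of_sq_le_sq' {x y : ℝ} (hx : 0 ≤ x) (hy : 0 ≤ y) (h : x ^ 2 ≤ y ^ 2) :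
    x ≤ y := by nlinarith

private lemma lt_of_sq_lt_sq' {x y : ℝ} (hx : 0 ≤ x) (hy : 0 ≤ y) (h : x ^ 2 < y ^ 2) :
    x < y := by nlinarith

private lemma alg1 (s u v γ q p ε : ℝ) (hs : s ≠ 0) (hu : u ≠ 0) :
    s * (γ * (q * v) / (s * u) + p * ε) = γ * (q * (v / u)) + ε * s * p := by
  field_simp

private lemma alg2 (s r γ q p a b : ℝ) (hs : s ≠ 0) (hr : r ≠ 0)
    (har : a * r = q) (hbr : b * r = p) :
    s * ((γ * q ^ 2 + p ^ 2) / (s * r)) = γ * (q * a) + p * b := by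
  have hkey : γ * q ^ 2 + p ^ 2 = (γ * (q * a) + p * b) * r := by
    linear_combination (-(γ * q)) * har + (-p) * hbr
  rw [hkey, mul_div_mul_right _ _ hr, mul_comm, div_mul_cancel₀ _ hs]

private lemma alg3 (s r γ q p a b : ℝ) (hs : s ≠ 0) (hr : r ≠ 0)
    (har : a * r = q) (hbr : b * r = p) (hpq1 : p + q = 1) :
    s * (γ * (p - q) / (s * r)) = γ * (p * b - q * a) := by
  have hkey : γ * (p - q) = γ * (p * b - q * a) * r := by
    linear_combination (-(γ * p)) * hbr + γ * q * har + (-(γ * (p - q))) * hpq1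
  rw [hkey, mul_div_mul_right _ _ hr, mul_comm, div_mul_cancel₀ _ hs]

private lemma alg4 (s γ p q a b : ℝ) (hp : p ≠ 0) (hb : b ≠ 0)
    (e1 : q * b = p * a) (hpq1 : p + q = 1) :
    s * (γ * (p - q) / p) = s * γ * (p * b - q * a) / b := by
  have hkey : (p * b - q * a) * p = (p - q) * b := by
    linear_combination q * e1 + b * (p - q) * hpq1
  have h2 : γ * (p - q) / p = γ * (p * b - q * a) / b := by
    rw [div_eq_div_iff hp hb]
    linear_combination (-γ) * hkey
  rw [h2]
  ring

private lemma alg5 (s a γ q p : ℝ) (ha : a ≠ 0) :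
    s / a * (γ * (q * a) + a * p) = s * (γ * q + p) := by
  field_simp

set_option maxHeartbeats 2000000 in
theorem esseen_fraction_g1_two_point
    {Ω : Type*} [MeasurableSpace Ω] (μ : Measure Ω) [IsProbabilityMeasure μ]
    (n : ℕ) (hn : 0 < n) (p : ℝ) (hp : p ∈ Set.Ico (1/2 : ℝ) 1) (q : ℝ) (hq : q = 1 - p)
    (X : Ω → ℝ) (hX : Measurable X)
    (hXp : μ {ω | X ω = Real.sqrt (q / p)} = ENNReal.ofReal p)
    (hXq : μ {ω | X ω = -Real.sqrt (p / q)} = ENNReal.ofReal q)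
    (ε γ : ℝ) (hε : 1 < ε) (hγ : 0 < γ)
    (L : ℝ)
    (hL : L = (Real.sqrt n)⁻¹ *
      sSup ((fun z => max z (Real.sqrt n) / z * (γ * |mu3 μ X z| + z * sig2 μ X z)) ''
        Set.Ioo (0 : ℝ) (ε * Real.sqrt n))) :
    (p = 1/2 → L = 1) ∧
    (1/2 < p →
      ((n : ℝ) * ε ^ 2 ≤ p / q →
        L = max (max 1 (γ * q + p))
              (γ * q ^ (3/2 : ℝ) / Real.sqrt ((n : ℝ) * p) + p * ε)) ∧
      ((n : ℝ) ≤ p / q → p / q < (n : ℝ) * ε ^ 2 →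
        L = max (max 1 (γ * q + p))
              (max ((γ * q ^ 2 + p ^ 2) / Real.sqrt ((n : ℝ) * p * q))
                (γ * (p - q) / Real.sqrt ((n : ℝ) * p * q)))) ∧
      (p / q < (n : ℝ) →
        L = max (max 1 (γ * q + p)) (γ * (p - q) / p))) := by
  obtain ⟨hp1, hp2⟩ := hp
  have hp0 : 0 < p := lt_of_lt_of_le (by norm_num) hp1
  have hq0 : 0 < q := by rw [hq]; linarith
  have hqp : q ≤ p := by rw [hq]; linarith
  have hpq1 : p + q = 1 := by rw [hq]; ring
  have hε0 : 0 < ε := lt_trans one_pos hε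
  set s := Real.sqrt n with hs_def
  set a := Real.sqrt (q / p) with ha_def
  set b := Real.sqrt (p / q) with hb_def
  have ha0 : 0 < a := Real.sqrt_pos.mpr (div_pos hq0 hp0)
  have hb0 : 0 < b := Real.sqrt_pos.mpr (div_pos hp0 hq0)
  have ha2 : a ^ 2 = q / p := Real.sq_sqrt (le_of_lt (div_pos hq0 hp0))
  have hb2 : b ^ 2 = p / q := Real.sq_sqrt (le_of_lt (div_pos hp0 hq0))
  have hs0 : 0 < s := Real.sqrt_pos.mpr (by exact_mod_cast hn)
  have hs2 : s ^ 2 = n := Real.sq_sqrt (Nat.cast_nonneg n)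
  have hn1 : (1 : ℝ) ≤ n := by exact_mod_cast hn
  have hs1 : 1 ≤ s := Real.one_le_sqrt.mpr hn1
  have ha1 : a ≤ 1 := Real.sqrt_le_one.mpr ((div_le_one hp0).mpr hqp)
  have hb1 : 1 ≤ b := Real.one_le_sqrt.mpr ((one_le_div hq0).mpr hqp)
  have hab1 : a ≤ b := ha1.trans hb1
  have hsεs : s < ε * s := by
    have h := mul_lt_mul_of_pos_right hε hs0
    rwa [one_mul] at h
  have hεs : 1 < ε * s := lt_of_le_of_lt hs1 hsεs
  have hne : a ≠ -b := by intro h; linarith [ha0, hb0]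
  have hpa : p * a ^ 2 = q := by rw [ha2]; field_simp
  have hqb : q * b ^ 2 = p := by rw [hb2]; field_simp
  have pa3 : p * a ^ 3 = q * a := by
    rw [show a ^ 3 = a ^ 2 * a by ring, ← mul_assoc, hpa]
  have qb3 : q * b ^ 3 = p * b := by
    rw [show b ^ 3 = b ^ 2 * b by ring, ← mul_assoc, hqb]
  have hmu : ∀ z : ℝ, mu3 μ X z =
      (if a < z then q * a else 0) - (if b < z then p * b else 0) := by
    intro z
    have h2 : mu3 μ X z = p * (if |a| < z then a ^ 3 else 0)
        + q * (if |(-b)| < z then (-b) ^ 3 else 0) :=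
      two_point_integral μ X hX a (-b) p q hne hp0.le hq0.le hpq1 hXp hXq
        (fun y => if |y| < z then y ^ 3 else 0)
    rw [h2, abs_of_pos ha0, abs_neg, abs_of_pos hb0]
    split_ifs with h1 h3
    · linear_combination pa3 - qb3
    · linear_combination pa3
    · linear_combination -qb3
    · ring
  have hsig : ∀ z : ℝ, sig2 μ X z =
      (if z ≤ a then q else 0) + (if z ≤ b then p else 0) := by
    intro z
    have h2 : sig2 μ X z = p * (if z ≤ |a| then a ^ 2 else 0)
        + q * (if z ≤ |(-b)| then (-b) ^ 2 else 0) :=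
      two_point_integral μ X hX a (-b) p q hne hp0.le hq0.le hpq1 hXp hXq
        (fun y => if z ≤ |y| then y ^ 2 else 0)
    rw [h2, abs_of_pos ha0, abs_neg, abs_of_pos hb0]
    split_ifs with h1 h3
    · linear_combination hpa + hqb
    · linear_combination hpa
    · linear_combination hqb
    · ring
  set F := fun z : ℝ => max z s / z * (γ * |mu3 μ X z| + z * sig2 μ X z) with hF_def
  set S := F '' Set.Ioo (0 : ℝ) (ε * s) with hS_def
  have hF1 : ∀ z : ℝ, 0 < z → z ≤ a → F z = s := by
    intro z hz hza
    have h1 : ¬ a < z := not_lt.mpr hza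
    have h2 : ¬ b < z := not_lt.mpr (hza.trans hab1)
    have h3 : z ≤ b := hza.trans hab1
    simp only [hF_def, hmu z, hsig z, if_neg h1, if_neg h2, if_pos hza, if_pos h3]
    rw [sub_zero, abs_zero, mul_zero, zero_add, show q + p = (1 : ℝ) by linarith, mul_one,
      div_mul_cancel₀ _ (ne_of_gt hz), max_eq_right ((hza.trans ha1).trans hs1)]
  have hF2 : ∀ z : ℝ, a < z → z ≤ b → F z = max z s / z * (γ * (q * a) + z * p) := by
    intro z h1 h3
    simp only [hF_def, hmu z, hsig z, if_pos h1, if_neg (not_lt.mpr h3),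
      if_neg (not_le.mpr h1), if_pos h3]
    rw [sub_zero, zero_add, abs_of_nonneg (by positivity)]
  have hF3 : ∀ z : ℝ, b < z → F z = max z s / z * (γ * (p * b - q * a)) := by
    intro z h1
    have h2 : a < z := lt_of_le_of_lt hab1 h1
    simp only [hF_def, hmu z, hsig z, if_pos h1, if_pos h2, if_neg (not_le.mpr h2),
      if_neg (not_le.mpr h1)]
    have hge : q * a ≤ p * b := by nlinarith
    rw [abs_sub_comm, abs_of_nonneg (by linarith), add_zero, mul_zero, add_zero]
  have haIoo : a ∈ Set.Ioo (0 : ℝ) (ε * s) := ⟨ha0, lt_of_le_of_lt ha1 hεs⟩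
  have hsS : s ∈ S := ⟨a, haIoo, hF1 a ha0 le_rfl⟩
  have hSne : S.Nonempty := ⟨s, hsS⟩
  have hub_s : ∀ U ∈ upperBounds S, s ≤ U := fun U hU => hU hsS
  have hub_mid : ∀ z : ℝ, a < z → z ≤ s → z ≤ b → F z ≤ s * (γ * q + p) := by
    intro z h1 h2 h3
    rw [hF2 z h1 h3, max_eq_right h2, div_mul_eq_mul_div, div_le_iff₀ (lt_trans ha0 h1)]
    nlinarith [mul_nonneg (mul_nonneg (mul_nonneg hs0.le hγ.le) hq0.le) (sub_nonneg.mpr h1.le)]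
  constructor
  · -- p = 1/2
    intro hhalf
    have hqp'' : q = p := by rw [hq, hhalf]; norm_num
    have ha1'' : a = 1 := by rw [ha_def, hqp'', div_self hp0.ne', Real.sqrt_one]
    have hb1'' : b = 1 := by rw [hb_def, hqp'', div_self hp0.ne', Real.sqrt_one]
    have hlub : IsLUB S s := by
      constructor
      · rintro y ⟨z, hz, rfl⟩
        rcases le_or_gt z a with h | h
        · exact le_of_eq (hF1 z hz.1 h)
        · have hbz : b < z := by rw [hb1'']; rw [ha1''] at h; exact h
          rw [hF3 z hbz, show p * b - q * a = 0 by rw [ha1'', hb1'', hqp'']; ring,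
            mul_zero, mul_zero]
          exact hs0.le
      · intro U hU
        exact hub_s U hU
    rw [hL, hlub.csSup_eq hSne, inv_mul_cancel₀ hs0.ne']
  · -- p > 1/2
    intro hpgt
    have hqp' : q < p := by rw [hq]; linarith
    have ha1' : a < 1 := by
      have h := Real.sqrt_lt_sqrt (div_pos hq0 hp0).le ((div_lt_one hp0).mpr hqp')
      rwa [Real.sqrt_one] at h
    have hb1' : 1 < b := by
      have h := Real.sqrt_lt_sqrt zero_le_one ((one_lt_div hq0).mpr hqp')
      rwa [Real.sqrt_one] at h
    have hab' : a < b := ha1'.trans hb1'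
    have hpbqa : 0 < p * b - q * a := by
      have h1 : q * a ≤ q := mul_le_of_le_one_right hq0.le ha1
      have h2 : p ≤ p * b := le_mul_of_one_le_right hp0.le hb1
      linarith
    set r := Real.sqrt (p * q) with hr_def
    have hr0 : 0 < r := Real.sqrt_pos.mpr (mul_pos hp0 hq0)
    have hr2 : r ^ 2 = p * q := Real.sq_sqrt (mul_pos hp0 hq0).le
    have har : a * r = q := by
      have h1 : q / p * (p * q) = q ^ 2 := by field_simp
      rw [ha_def, hr_def, ← Real.sqrt_mul (div_pos hq0 hp0).le, h1, Real.sqrt_sq hq0.le]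
    have hbr : b * r = p := by
      have h1 : p / q * (p * q) = p ^ 2 := by field_simp
      rw [hb_def, hr_def, ← Real.sqrt_mul (div_pos hp0 hq0).le, h1, Real.sqrt_sq hp0.le]
    have hpar : p * a = r := by
      apply mul_right_cancel₀ hr0.ne'
      linear_combination p * har - hr2
    have hqbr : q * b = r := by
      apply mul_right_cancel₀ hr0.ne'
      linear_combination q * hbr - hr2
    have hnpq : Real.sqrt ((n : ℝ) * p * q) = s * r := by
      rw [mul_assoc, Real.sqrt_mul (Nat.cast_nonneg n), ← hs_def, ← hr_def]
    have hnp : Real.sqrt ((n : ℝ) * p) = s * Real.sqrt p := by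
      rw [Real.sqrt_mul (Nat.cast_nonneg n), ← hs_def]
    have hsp0 : 0 < Real.sqrt p := Real.sqrt_pos.mpr hp0
    have hq32 : q ^ (3 / 2 : ℝ) = q * Real.sqrt q := by
      rw [show (3 / 2 : ℝ) = 1 + 1 / 2 by norm_num, Real.rpow_add hq0, Real.rpow_one,
        ← Real.sqrt_eq_rpow]
    have hasq : a = Real.sqrt q / Real.sqrt p := by rw [ha_def, Real.sqrt_div hq0.le]
    have hid1 : s * (γ * q ^ (3 / 2 : ℝ) / Real.sqrt ((n : ℝ) * p) + p * ε)
        = γ * (q * a) + ε * s * p := by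
      rw [hq32, hnp, hasq]
      exact alg1 s _ _ γ q p ε hs0.ne' hsp0.ne'
    have hid2 : s * ((γ * q ^ 2 + p ^ 2) / Real.sqrt ((n : ℝ) * p * q))
        = γ * (q * a) + p * b := by
      rw [hnpq]
      exact alg2 s r γ q p a b hs0.ne' hr0.ne' har hbr
    have hid3 : s * (γ * (p - q) / Real.sqrt ((n : ℝ) * p * q)) = γ * (p * b - q * a) := by
      rw [hnpq]
      exact alg3 s r γ q p a b hs0.ne' hr0.ne' har hbr hpq1
    have hid4 : s * (γ * (p - q) / p) = s * γ * (p * b - q * a) / b :=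
      alg4 s γ p q a b hp0.ne' hb0.ne' (hqbr.trans hpar.symm) hpq1
    -- lower bound for second max component
    have hlb_gq : ∀ U ∈ upperBounds S, s * (γ * q + p) ≤ U := by
      intro U hU
      have hev : ∀ᶠ z in 𝓝[>] a, F z ≤ U := by
        filter_upwards [Ioo_mem_nhdsGT_of_mem (left_mem_Ico.mpr ha1')] with z hz
        exact hU ⟨z, ⟨lt_trans ha0 hz.1, lt_trans hz.2 hεs⟩, rfl⟩
      have hcont : Tendsto (fun z => s / z * (γ * (q * a) + z * p)) (𝓝 a)
          (𝓝 (s / a * (γ * (q * a) + a * p))) :=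
        (continuousAt_const.div continuousAt_id ha0.ne').mul
          (continuousAt_const.add (continuousAt_id.mul continuousAt_const))
      have heq : s / a * (γ * (q * a) + a * p) = s * (γ * q + p) := alg5 s a γ q p ha0.ne'
      have hlim : Tendsto F (𝓝[>] a) (𝓝 (s * (γ * q + p))) := by
        rw [← heq]
        apply Tendsto.congr' _ (hcont.mono_left nhdsWithin_le_nhds)
        filter_upwards [Ioo_mem_nhdsGT_of_mem (left_mem_Ico.mpr ha1')] with z hz
        rw [hF2 z hz.1 (hz.2.le.trans hb1'.le), max_eq_right (hz.2.le.trans hs1)]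
      exact le_of_tendsto hlim hev
    refine ⟨?_, ?_, ?_⟩
    · -- subcase 1 : n ε² ≤ p/q
      intro hcase
      have hεsb : ε * s ≤ b := by
        have h2 : (ε * s) ^ 2 ≤ b ^ 2 := by
          rw [hb2, mul_pow, hs2]
          calc ε ^ 2 * (n : ℝ) = (n : ℝ) * ε ^ 2 := by ring
            _ ≤ p / q := hcase
        exact le_of_sq_le_sq' (mul_pos hε0 hs0).le hb0.le h2
      set M := max (max 1 (γ * q + p))
        (γ * q ^ (3 / 2 : ℝ) / Real.sqrt ((n : ℝ) * p) + p * ε) with hM_def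
      have hM1 : (1 : ℝ) ≤ M := le_trans (le_max_left 1 _) (le_max_left _ _)
      have hlub : IsLUB S (s * M) := by
        constructor
        · rintro y ⟨z, ⟨hz0, hzε⟩, rfl⟩
          rcases le_or_gt z a with h | h
          · rw [hF1 z hz0 h]
            exact le_mul_of_one_le_right hs0.le hM1
          · have hzb : z ≤ b := le_of_lt (lt_of_lt_of_le hzε hεsb)
            rcases le_or_gt z s with h2 | h2
            · exact le_trans (hub_mid z h h2 hzb)
                (mul_le_mul_of_nonneg_left
                  (le_trans (le_max_right 1 _) (le_max_left _ _)) hs0.le)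
            · rw [hF2 z h hzb, max_eq_left h2.le, div_self (ne_of_gt (lt_trans hs0 h2)),
                one_mul]
              have h3 : z * p ≤ ε * s * p := mul_le_mul_of_nonneg_right hzε.le hp0.le
              calc γ * (q * a) + z * p ≤ γ * (q * a) + ε * s * p := by linarith
                _ = s * (γ * q ^ (3 / 2 : ℝ) / Real.sqrt ((n : ℝ) * p) + p * ε) := hid1.symm
                _ ≤ s * M := mul_le_mul_of_nonneg_left (le_max_right _ _) hs0.le
        · intro U hU
          rw [mul_comm, ← le_div_iff₀ hs0]
          refine max_le (max_le ?_ ?_) ?_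
          · rw [le_div_iff₀ hs0, one_mul]
            exact hub_s U hU
          · rw [le_div_iff₀ hs0, mul_comm]
            exact hlb_gq U hU
          · rw [le_div_iff₀ hs0, mul_comm, hid1]
            have hev : ∀ᶠ z in 𝓝[<] (ε * s), F z ≤ U := by
              filter_upwards [Ioo_mem_nhdsLT_of_mem ⟨hsεs, le_refl (ε * s)⟩] with z hz
              exact hU ⟨z, ⟨lt_trans hs0 hz.1, hz.2⟩, rfl⟩
            have hcont : Tendsto (fun z : ℝ => γ * (q * a) + z * p) (𝓝 (ε * s))
                (𝓝 (γ * (q * a) + ε * s * p)) :=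
              continuousAt_const.add (continuousAt_id.mul continuousAt_const)
            have hlim : Tendsto F (𝓝[<] (ε * s)) (𝓝 (γ * (q * a) + ε * s * p)) := by
              apply Tendsto.congr' _ (hcont.mono_left nhdsWithin_le_nhds)
              filter_upwards [Ioo_mem_nhdsLT_of_mem ⟨hsεs, le_refl (ε * s)⟩] with z hz
              have hzb : z ≤ b := le_of_lt (lt_of_lt_of_le hz.2 hεsb)
              have hza : a < z := lt_of_le_of_lt ha1 (lt_of_le_of_lt hs1 hz.1)
              rw [hF2 z hza hzb, max_eq_left hz.1.le,
                div_self (ne_of_gt (lt_trans hs0 hz.1)), one_mul]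
            exact le_of_tendsto hlim hev
      rw [hL, hlub.csSup_eq hSne, ← mul_assoc, inv_mul_cancel₀ hs0.ne', one_mul]
    · -- subcase 2
      intro hcase1 hcase2
      have hsb : s ≤ b := by
        have h2 : s ^ 2 ≤ b ^ 2 := by rw [hs2, hb2]; exact hcase1
        exact le_of_sq_le_sq' hs0.le hb0.le h2
      have hbεs : b < ε * s := by
        have h2 : b ^ 2 < (ε * s) ^ 2 := by
          rw [hb2, mul_pow, hs2]
          calc p / q < (n : ℝ) * ε ^ 2 := hcase2
            _ = ε ^ 2 * (n : ℝ) := by ring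
        exact lt_of_sq_lt_sq' hb0.le (mul_pos hε0 hs0).le h2
      set M := max (max 1 (γ * q + p))
        (max ((γ * q ^ 2 + p ^ 2) / Real.sqrt ((n : ℝ) * p * q))
          (γ * (p - q) / Real.sqrt ((n : ℝ) * p * q))) with hM_def
      have hM1 : (1 : ℝ) ≤ M := le_trans (le_max_left 1 _) (le_max_left _ _)
      have ht3M : (γ * q ^ 2 + p ^ 2) / Real.sqrt ((n : ℝ) * p * q) ≤ M :=
        le_trans (le_max_left _ _) (le_max_right _ _)
      have ht4M : γ * (p - q) / Real.sqrt ((n : ℝ) * p * q) ≤ M :=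
        le_trans (le_max_right _ _) (le_max_right _ _)
      have hFb : F b = γ * (q * a) + b * p := by
        rw [hF2 b hab' le_rfl, max_eq_left hsb, div_self hb0.ne', one_mul]
      have hlub : IsLUB S (s * M) := by
        constructor
        · rintro y ⟨z, ⟨hz0, hzε⟩, rfl⟩
          rcases le_or_gt z a with h | h
          · rw [hF1 z hz0 h]
            exact le_mul_of_one_le_right hs0.le hM1
          · rcases le_or_gt z b with hzb | hzb
            · rcases le_or_gt z s with h2 | h2
              · exact le_trans (hub_mid z h h2 hzb)
                  (mul_le_mul_of_nonneg_left
                    (le_trans (le_max_right 1 _) (le_max_left _ _)) hs0.le)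
              · rw [hF2 z h hzb, max_eq_left h2.le, div_self (ne_of_gt (lt_trans hs0 h2)),
                  one_mul]
                have h3 : z * p ≤ b * p := mul_le_mul_of_nonneg_right hzb hp0.le
                calc γ * (q * a) + z * p ≤ γ * (q * a) + p * b := by linarith
                  _ = s * ((γ * q ^ 2 + p ^ 2) / Real.sqrt ((n : ℝ) * p * q)) := hid2.symm
                  _ ≤ s * M := mul_le_mul_of_nonneg_left ht3M hs0.le
            · have hsz : s ≤ z := le_trans hsb hzb.le
              rw [hF3 z hzb, max_eq_left hsz, div_self (ne_of_gt (lt_of_lt_of_le hs0 hsz)),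
                one_mul]
              calc γ * (p * b - q * a)
                  = s * (γ * (p - q) / Real.sqrt ((n : ℝ) * p * q)) := hid3.symm
                _ ≤ s * M := mul_le_mul_of_nonneg_left ht4M hs0.le
        · intro U hU
          rw [mul_comm, ← le_div_iff₀ hs0]
          refine max_le (max_le ?_ ?_) (max_le ?_ ?_)
          · rw [le_div_iff₀ hs0, one_mul]
            exact hub_s U hU
          · rw [le_div_iff₀ hs0, mul_comm]
            exact hlb_gq U hU
          · rw [le_div_iff₀ hs0, mul_comm, hid2]
            have h := hU ⟨b, ⟨hb0, hbεs⟩, rfl⟩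
            rw [hFb] at h
            linarith
          · rw [le_div_iff₀ hs0, mul_comm, hid3]
            have hz1 : b < (b + ε * s) / 2 := by linarith
            have h := hU ⟨(b + ε * s) / 2, ⟨lt_trans hb0 hz1, by linarith⟩, rfl⟩
            rw [hF3 _ hz1, max_eq_left (le_trans hsb hz1.le),
              div_self (ne_of_gt (lt_trans hb0 hz1)), one_mul] at h
            exact h
      rw [hL, hlub.csSup_eq hSne, ← mul_assoc, inv_mul_cancel₀ hs0.ne', one_mul]
    · -- subcase 3
      intro hcase
      have hbs : b < s := by
        have h2 : b ^ 2 < s ^ 2 := by rw [hs2, hb2]; exact hcase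
        exact lt_of_sq_lt_sq' hb0.le hs0.le h2
      set M := max (max 1 (γ * q + p)) (γ * (p - q) / p) with hM_def
      have hM1 : (1 : ℝ) ≤ M := le_trans (le_max_left 1 _) (le_max_left _ _)
      have htM : γ * (p - q) / p ≤ M := le_max_right _ _
      have hlub : IsLUB S (s * M) := by
        constructor
        · rintro y ⟨z, ⟨hz0, hzε⟩, rfl⟩
          rcases le_or_gt z a with h | h
          · rw [hF1 z hz0 h]
            exact le_mul_of_one_le_right hs0.le hM1
          · rcases le_or_gt z b with hzb | hzb
            · exact le_trans (hub_mid z h (hzb.trans hbs.le) hzb)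
                (mul_le_mul_of_nonneg_left
                  (le_trans (le_max_right 1 _) (le_max_left _ _)) hs0.le)
            · rcases le_or_gt z s with h2 | h2
              · rw [hF3 z hzb, max_eq_right h2, div_mul_eq_mul_div,
                  show s * (γ * (p * b - q * a)) = s * γ * (p * b - q * a) by ring]
                calc s * γ * (p * b - q * a) / z ≤ s * γ * (p * b - q * a) / b :=
                      div_le_div_of_nonneg_left
                        (by positivity) hb0 hzb.le
                  _ = s * (γ * (p - q) / p) := hid4.symm
                  _ ≤ s * M := mul_le_mul_of_nonneg_left htM hs0.le
              · rw [hF3 z hzb, max_eq_left h2.le, div_self (ne_of_gt (lt_trans hs0 h2)),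
                  one_mul]
                have hle : γ * (p * b - q * a) ≤ s * γ * (p * b - q * a) / b := by
                  rw [le_div_iff₀ hb0]
                  calc γ * (p * b - q * a) * b ≤ γ * (p * b - q * a) * s :=
                        mul_le_mul_of_nonneg_left hbs.le (mul_nonneg hγ.le hpbqa.le)
                    _ = s * γ * (p * b - q * a) := by ring
                calc γ * (p * b - q * a) ≤ s * γ * (p * b - q * a) / b := hle
                  _ = s * (γ * (p - q) / p) := hid4.symm
                  _ ≤ s * M := mul_le_mul_of_nonneg_left htM hs0.le
        · intro U hU
          rw [mul_comm, ← le_div_iff₀ hs0]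
          refine max_le (max_le ?_ ?_) ?_
          · rw [le_div_iff₀ hs0, one_mul]
            exact hub_s U hU
          · rw [le_div_iff₀ hs0, mul_comm]
            exact hlb_gq U hU
          · rw [le_div_iff₀ hs0, mul_comm]
            have hev : ∀ᶠ z in 𝓝[>] b, F z ≤ U := by
              filter_upwards [Ioo_mem_nhdsGT_of_mem (left_mem_Ico.mpr hbs)] with z hz
              exact hU ⟨z, ⟨lt_trans hb0 hz.1, lt_trans hz.2 hsεs⟩, rfl⟩
            have hcont : Tendsto (fun z : ℝ => s / z * (γ * (p * b - q * a))) (𝓝 b)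
                (𝓝 (s / b * (γ * (p * b - q * a)))) :=
              (continuousAt_const.div continuousAt_id hb0.ne').mul continuousAt_const
            have hval : s / b * (γ * (p * b - q * a)) = s * (γ * (p - q) / p) := by
              rw [hid4]
              ring
            have hlim : Tendsto F (𝓝[>] b) (𝓝 (s * (γ * (p - q) / p))) := by
              rw [← hval]
              apply Tendsto.congr' _ (hcont.mono_left nhdsWithin_le_nhds)
              filter_upwards [Ioo_mem_nhdsGT_of_mem (left_mem_Ico.mpr hbs)] with z hz
              rw [hF3 z hz.1, max_eq_right hz.2.le]
            exact le_of_tendsto hlim hev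
      rw [hL, hlub.csSup_eq hSne, ← mul_assoc, inv_mul_cancel₀ hs0.ne', one_mul]
end

section
/- Fix ε > 0 and γ > 0. (a) If C ≥ 0 is such that for every n ∈ ℕ and all independent random variables X_1,…,X_n with E X_k = 0, E X_k² < ∞ and B_n² = Σ_k E X_k² > 0 one has Δ_n ≤ C·sup_{0<z<ε}( γ·|M_n(z)| + z·L_n(z) ), then C ≥ (Φ(1) − 1/2)/min{1,ε} > 0.3413/min{1,ε}. (b) The same conclusion C ≥ (Φ(1) − 1/2)/min{1,ε} holds if instead Δ_n ≤ C·( γ·|M_n(ε)| + sup_{0<z<ε} z·L_n(z) ) for all such n and X_1,…,X_n. -/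
open MeasureTheory ProbabilityTheory Real Set

/-- The standard normal distribution function. -/
noncomputable def Phi (x : ℝ) : ℝ :=
  ∫ t in Set.Iic x, Real.exp (-t ^ 2 / 2) / Real.sqrt (2 * Real.pi)

/-- `B_n = sqrt (Σ E X_k²)`. -/
noncomputable def Bn {Ω : Type} [MeasurableSpace Ω] (μ : Measure Ω) {n : ℕ}
    (X : Fin n → Ω → ℝ) : ℝ :=
  Real.sqrt (∑ k, ∫ ω, (X k ω) ^ 2 ∂μ)

/-- Uniform distance between the d.f. of the normalized sum and the standard normal d.f. -/
noncomputable def Deltan {Ω : Type} [MeasurableSpace Ω] (μ : Measure Ω) {n : ℕ}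
    (X : Fin n → Ω → ℝ) : ℝ :=
  ⨆ x : ℝ, |(μ {ω | (∑ k, X k ω) / Bn μ X < x}).toReal - Phi x|

/-- `M_n(z) = B_n⁻³ Σ E[X_k³ 1_{|X_k| < z B_n}]`. -/
noncomputable def Mn {Ω : Type} [MeasurableSpace Ω] (μ : Measure Ω) {n : ℕ}
    (X : Fin n → Ω → ℝ) (z : ℝ) : ℝ :=
  (∑ k, ∫ ω, (if |X k ω| < z * Bn μ X then (X k ω) ^ 3 else 0) ∂μ) / (Bn μ X) ^ 3

/-- `L_n(z) = B_n⁻² Σ E[X_k² 1_{|X_k| ≥ z B_n}]` (the Lindeberg fraction). -/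
noncomputable def Lnn {Ω : Type} [MeasurableSpace Ω] (μ : Measure Ω) {n : ℕ}
    (X : Fin n → Ω → ℝ) (z : ℝ) : ℝ :=
  (∑ k, ∫ ω, (if z * Bn μ X ≤ |X k ω| then (X k ω) ^ 2 else 0) ∂μ) / (Bn μ X) ^ 2

lemma gauss_fun_eq : (fun t : ℝ => Real.exp (-t ^ 2 / 2)) = fun t : ℝ => Real.exp (-(1/2) * t ^ 2) := by
  funext t; congr 1; ring

lemma gauss_integrable : Integrable (fun t : ℝ => Real.exp (-t ^ 2 / 2)) := by
  rw [gauss_fun_eq]; exact integrable_exp_neg_mul_sq (by norm_num)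

lemma gauss_total : ∫ t : ℝ, Real.exp (-t ^ 2 / 2) = Real.sqrt (2 * π) := by
  rw [gauss_fun_eq, integral_gaussian]; congr 1; rw [div_div_eq_mul_div]; ring

lemma Phi_eq (x : ℝ) : Phi x = (∫ t in Iic x, Real.exp (-t ^ 2 / 2)) / Real.sqrt (2 * π) := by
  rw [Phi, integral_div]

lemma gauss_half : ∫ t in Iic (0:ℝ), Real.exp (-t ^ 2 / 2) = Real.sqrt (2 * π) / 2 := by
  have h := integral_comp_neg_Iic (0:ℝ) (fun t => Real.exp (-t ^ 2 / 2))
  simp only [neg_zero] at h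
  have h2 : (∫ x in Iic (0:ℝ), Real.exp (-(-x) ^ 2 / 2)) = ∫ x in Iic (0:ℝ), Real.exp (-x ^ 2 / 2) := by
    apply setIntegral_congr_fun measurableSet_Iic
    intro x _; norm_num
  rw [h2] at h
  rw [h, gauss_fun_eq, integral_gaussian_Ioi]
  congr 2; rw [div_div_eq_mul_div]; ring

lemma Phi_zero : Phi 0 = 1/2 := by
  have h : Real.sqrt (2 * π) ≠ 0 := by positivity
  rw [Phi_eq, gauss_half]
  field_simp

lemma Phi_nonneg (x : ℝ) : 0 ≤ Phi x := by
  rw [Phi_eq]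
  apply div_nonneg _ (Real.sqrt_nonneg _)
  apply setIntegral_nonneg measurableSet_Iic
  intro t _; positivity

lemma Phi_le_one (x : ℝ) : Phi x ≤ 1 := by
  rw [Phi_eq]
  rw [div_le_one (by positivity)]
  rw [← gauss_total]
  exact setIntegral_le_integral gauss_integrable (Filter.Eventually.of_forall fun t => by positivity)

noncomputable def Qpoly (t : ℝ) : ℝ :=
  t - t^3/6 + t^5/40 - t^7/336 + t^9/3456 - t^11/42240 - 7*t^13/3594240

noncomputable def qpoly (t : ℝ) : ℝ :=
  1 - t^2/2 + t^4/8 - t^6/48 + t^8/384 - t^10/3840 - 7*t^12/276480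

lemma Qpoly_deriv (t : ℝ) : HasDerivAt Qpoly (qpoly t) t := by
  have H := (((((hasDerivAt_id t).sub ((hasDerivAt_pow 3 t).div_const 6)).add
      ((hasDerivAt_pow 5 t).div_const 40)).sub ((hasDerivAt_pow 7 t).div_const 336)).add
      ((hasDerivAt_pow 9 t).div_const 3456)).sub
      (((hasDerivAt_pow 11 t).div_const 42240).add
        (((hasDerivAt_pow 13 t).const_mul 7).div_const 3594240))
  convert H using 1
  · rfl
  · rfl
  · funext x
    unfold Qpoly
    simp only [id_eq, Pi.sub_apply, Pi.add_apply]
    ring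
  · unfold qpoly
    push_cast
    norm_num
    ring

lemma qpoly_le_exp {t : ℝ} (ht : t ∈ Icc (0:ℝ) 1) : qpoly t ≤ Real.exp (-t^2/2) := by
  obtain ⟨h0, h1⟩ := ht
  set u : ℝ := t^2/2 with hu
  have hu0 : 0 ≤ u := by positivity
  have hu1 : u ≤ 1 := by nlinarith
  have habs : |(-u)| ≤ 1 := by rw [abs_neg, abs_of_nonneg hu0]; exact hu1
  have hb := Real.exp_bound habs (n := 6) (by norm_num)
  have hS : ∑ m ∈ Finset.range 6, (-u) ^ m / m.factorial
      = 1 - u + u^2/2 - u^3/6 + u^4/24 - u^5/120 := by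
    simp [Finset.sum_range_succ, Nat.factorial]
    ring
  rw [hS] at hb
  have hb2 : |(-u)| ^ 6 * ((6:ℕ).succ / ((6:ℕ).factorial * (6:ℕ))) = u^6 * (7/4320) := by
    rw [abs_neg, abs_of_nonneg hu0]
    norm_num [Nat.factorial]
  rw [hb2] at hb
  have hge : (1 - u + u^2/2 - u^3/6 + u^4/24 - u^5/120) - u^6 * (7/4320) ≤ Real.exp (-u) := by
    have := (abs_le.1 hb).1
    linarith
  have heq : -t^2/2 = -u := by rw [hu]; ring
  rw [heq]
  refine le_trans (le_of_eq ?_) hge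
  unfold qpoly
  rw [hu]
  ring

lemma qpoly_integral : ∫ t in (0:ℝ)..1, qpoly t = 1 - 1/6 + 1/40 - 1/336 + 1/3456 - 1/42240 - 7/3594240 := by
  rw [intervalIntegral.integral_eq_sub_of_hasDerivAt (f := Qpoly) (fun x _ => Qpoly_deriv x)]
  · unfold Qpoly; norm_num
  · apply Continuous.intervalIntegrable
    unfold qpoly; continuity

lemma key : (0.3413 : ℝ) < Phi 1 - 1/2 := by
  have hIq : (1 - 1/6 + 1/40 - 1/336 + 1/3456 - 1/42240 - 7/3594240 : ℝ)
      ≤ ∫ t in (0:ℝ)..1, Real.exp (-t^2/2) := by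
    rw [← qpoly_integral]
    apply intervalIntegral.integral_mono_on (by norm_num)
    · apply Continuous.intervalIntegrable; unfold qpoly; continuity
    · exact gauss_integrable.intervalIntegrable
    · exact fun x hx => qpoly_le_exp hx
  have hdiff : Phi 1 - 1/2 = (∫ t in (0:ℝ)..1, Real.exp (-t^2/2)) / Real.sqrt (2*π) := by
    rw [show (1/2 : ℝ) = Phi 0 from Phi_zero.symm, Phi_eq, Phi_eq, div_sub_div_same,
      intervalIntegral.integral_Iic_sub_Iic gauss_integrable.integrableOn gauss_integrable.integrableOn]
  rw [hdiff]
  have hsq : Real.sqrt (2*π) < (1 - 1/6 + 1/40 - 1/336 + 1/3456 - 1/42240 - 7/3594240 : ℝ) / 0.3413 := by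
    rw [Real.sqrt_lt' (by norm_num)]
    nlinarith [Real.pi_lt_d6]
  have hpos : (0:ℝ) < Real.sqrt (2*π) := by positivity
  rw [lt_div_iff₀ hpos]
  calc (0.3413:ℝ) * Real.sqrt (2*π)
      < 0.3413 * ((1 - 1/6 + 1/40 - 1/336 + 1/3456 - 1/42240 - 7/3594240 : ℝ) / 0.3413) := by
        apply mul_lt_mul_of_pos_left hsq (by norm_num)
    _ = (1 - 1/6 + 1/40 - 1/336 + 1/3456 - 1/42240 - 7/3594240 : ℝ) := by norm_num
    _ ≤ _ := hIq

noncomputable def muex : Measure ℝ := (2 : ENNReal)⁻¹ • (Measure.dirac (-1 : ℝ) + Measure.dirac (1 : ℝ))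

noncomputable def Xex : Fin 1 → ℝ → ℝ := fun _ ω => ω

lemma integrable_dirac'' (f : ℝ → ℝ) (a : ℝ) : Integrable f (Measure.dirac a) := by
  have h : f =ᵐ[Measure.dirac a] fun _ => f a := by
    rw [Filter.EventuallyEq, MeasureTheory.ae_dirac_eq]
    simp
  exact (integrable_const (f a)).congr h.symm

lemma integrable_muex (f : ℝ → ℝ) : Integrable f muex := by
  rw [muex]
  exact (((integrable_dirac'' f (-1)).add_measure (integrable_dirac'' f 1)).smul_measure (by simp))

lemma integral_muex (f : ℝ → ℝ) : ∫ ω, f ω ∂muex = (f (-1) + f 1) / 2 := by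
  rw [muex, integral_smul_measure,
    integral_add_measure (integrable_dirac'' f (-1)) (integrable_dirac'' f 1),
    integral_dirac, integral_dirac]
  simp [ENNReal.toReal_inv]
  ring

instance : IsProbabilityMeasure muex := by
  constructor
  rw [muex]
  simp [Measure.smul_apply, Measure.add_apply]
  exact ENNReal.inv_two_add_inv_two

lemma sum_sq_ex : ∑ k : Fin 1, ∫ ω, (Xex k ω) ^ 2 ∂muex = 1 := by
  rw [Fin.sum_univ_one]
  show ∫ ω, ω ^ 2 ∂muex = 1
  rw [integral_muex]
  norm_num

lemma Bn_ex : Bn muex Xex = 1 := by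
  rw [Bn, sum_sq_ex, Real.sqrt_one]

lemma Mn_ex (z : ℝ) : Mn muex Xex z = 0 := by
  rw [Mn, Bn_ex]
  rw [Fin.sum_univ_one]
  show (∫ ω, (if |ω| < z * 1 then ω ^ 3 else 0) ∂muex) / 1 ^ 3 = 0
  rw [integral_muex]
  norm_num
  split_ifs <;> norm_num

lemma Lnn_ex (z : ℝ) : Lnn muex Xex z = if z ≤ 1 then 1 else 0 := by
  rw [Lnn, Bn_ex]
  rw [Fin.sum_univ_one]
  show (∫ ω, (if z * 1 ≤ |ω| then ω ^ 2 else 0) ∂muex) / 1 ^ 2 = _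
  rw [integral_muex]
  norm_num

lemma set_ex : {ω : ℝ | (∑ k : Fin 1, Xex k ω) / Bn muex Xex < 1} = Iio 1 := by
  ext ω
  simp [Xex, Bn_ex, Fin.sum_univ_one]

lemma measure_ex : (muex {ω | (∑ k : Fin 1, Xex k ω) / Bn muex Xex < 1}).toReal = 1/2 := by
  rw [set_ex, muex]
  simp [Measure.smul_apply, Measure.add_apply, Measure.dirac_apply]

lemma Deltan_ex_lower : Phi 1 - 1/2 ≤ Deltan muex Xex := by
  have hb : BddAbove (Set.range fun x : ℝ =>
      |(muex {ω | (∑ k : Fin 1, Xex k ω) / Bn muex Xex < x}).toReal - Phi x|) := by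
    refine ⟨1, ?_⟩
    rintro _ ⟨x, rfl⟩
    have h1 : (muex {ω | (∑ k : Fin 1, Xex k ω) / Bn muex Xex < x}).toReal ≤ 1 := by
      have h2 := ENNReal.toReal_mono ENNReal.one_ne_top
        (prob_le_one (μ := muex) (s := {ω | (∑ k : Fin 1, Xex k ω) / Bn muex Xex < x}))
      simpa using h2
    have h3 := Phi_nonneg x
    have h4 := Phi_le_one x
    have h5 : (0:ℝ) ≤ (muex {ω | (∑ k : Fin 1, Xex k ω) / Bn muex Xex < x}).toReal :=
      ENNReal.toReal_nonneg
    rw [abs_le]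
    constructor <;> linarith
  have h := le_ciSup hb (1:ℝ)
  rw [Deltan]
  refine le_trans (le_of_eq ?_) h
  rw [measure_ex, abs_of_nonpos (by linarith [key]), neg_sub]

theorem lower_bound_esseen_rozovskii_constants (ε γ : ℝ) (hε : 0 < ε) (hγ : 0 < γ) :
    (∀ C : ℝ, 0 ≤ C →
      (∀ (Ω : Type) (mΩ : MeasurableSpace Ω) (μ : Measure Ω), IsProbabilityMeasure μ →
        ∀ (n : ℕ) (X : Fin n → Ω → ℝ),
          (∀ k, Measurable (X k)) →
          iIndepFun X μ →
          (∀ k, Integrable (fun ω => (X k ω) ^ 2) μ) →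
          (∀ k, ∫ ω, X k ω ∂μ = 0) →
          0 < ∑ k, ∫ ω, (X k ω) ^ 2 ∂μ →
          Deltan μ X ≤
            C * sSup ((fun z => γ * |Mn μ X z| + z * Lnn μ X z) '' Set.Ioo (0 : ℝ) ε)) →
      (Phi 1 - 1/2) / min 1 ε ≤ C) ∧
    (∀ C : ℝ, 0 ≤ C →
      (∀ (Ω : Type) (mΩ : MeasurableSpace Ω) (μ : Measure Ω), IsProbabilityMeasure μ →
        ∀ (n : ℕ) (X : Fin n → Ω → ℝ),
          (∀ k, Measurable (X k)) →
          iIndepFun X μ →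
          (∀ k, Integrable (fun ω => (X k ω) ^ 2) μ) →
          (∀ k, ∫ ω, X k ω ∂μ = 0) →
          0 < ∑ k, ∫ ω, (X k ω) ^ 2 ∂μ →
          Deltan μ X ≤
            C * (γ * |Mn μ X ε| +
              sSup ((fun z => z * Lnn μ X z) '' Set.Ioo (0 : ℝ) ε))) →
      (Phi 1 - 1/2) / min 1 ε ≤ C) ∧
    0.3413 / min 1 ε < (Phi 1 - 1/2) / min 1 ε := by
  have hmin : (0:ℝ) < min 1 ε := lt_min one_pos hε
  have hmeas : ∀ k : Fin 1, Measurable (Xex k) := fun _ => measurable_id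
  have hind : iIndepFun Xex muex := iIndepFun.of_subsingleton
  have hint : ∀ k : Fin 1, Integrable (fun ω => (Xex k ω) ^ 2) muex := fun _ => integrable_muex _
  have hmean : ∀ k : Fin 1, ∫ ω, Xex k ω ∂muex = 0 := by
    intro k
    show ∫ ω : ℝ, ω ∂muex = 0
    rw [integral_muex]
    norm_num
  have hvar : 0 < ∑ k : Fin 1, ∫ ω, (Xex k ω) ^ 2 ∂muex := by
    rw [sum_sq_ex]; norm_num
  refine ⟨?_, ?_, ?_⟩
  · intro C hC h
    rw [div_le_iff₀ hmin]
    have hD := h ℝ _ muex inferInstance 1 Xex hmeas hind hint hmean hvar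
    have hsup : sSup ((fun z => γ * |Mn muex Xex z| + z * Lnn muex Xex z) '' Set.Ioo (0:ℝ) ε)
        ≤ min 1 ε := by
      apply Real.sSup_le
      · rintro _ ⟨z, hz, rfl⟩
        simp only [Mn_ex, Lnn_ex, abs_zero, mul_zero, zero_add]
        split_ifs with h1
        · rw [mul_one]; exact le_min h1 hz.2.le
        · rw [mul_zero]; positivity
      · positivity
    calc Phi 1 - 1/2 ≤ Deltan muex Xex := Deltan_ex_lower
      _ ≤ _ := hD
      _ ≤ C * min 1 ε := mul_le_mul_of_nonneg_left hsup hC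
  · intro C hC h
    rw [div_le_iff₀ hmin]
    have hD := h ℝ _ muex inferInstance 1 Xex hmeas hind hint hmean hvar
    have hsup : sSup ((fun z => z * Lnn muex Xex z) '' Set.Ioo (0:ℝ) ε) ≤ min 1 ε := by
      apply Real.sSup_le
      · rintro _ ⟨z, hz, rfl⟩
        simp only [Lnn_ex]
        split_ifs with h1
        · rw [mul_one]; exact le_min h1 hz.2.le
        · rw [mul_zero]; positivity
      · positivity
    rw [Mn_ex] at hD
    simp only [abs_zero, mul_zero, zero_add] at hD
    calc Phi 1 - 1/2 ≤ Deltan muex Xex := Deltan_ex_lower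
      _ ≤ _ := hD
      _ ≤ C * min 1 ε := mul_le_mul_of_nonneg_left hsup hC
  · exact div_lt_div_of_pos_right key hmin
end
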